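/- arXiv:math/9805024 — 2 statements merged into one kernel-verified Lean document; each statement's English description precedes it below -/
import Mathlib

section
/- Let k ≥ 1 and ε ∈ {1,−1}. Let F ∈ ℝ^{(2k+1)×(2k+1)} have entries F_{i,2k+2−i} = (−1)^{i+1}ε and 0 elsewhere, let n = 2k+2 and K = diag(F, 1) ∈ ℝ^{n×n}, and let S ∈ ℝ^{n×n} be the matrix with S_{i,i+1} = 1 for 1 ≤ i ≤ 2k and all other entries 0. For a = (a_1,…,a_k) ∈ ℝ^k and b ∈ ℝ set X(a,b) = Σ_{j=1}^{k} a_j S^{2j−1} + b(E_{1,2k+2} − ε E_{2k+2,2k+1}), an element of o(K). For λ, μ ∈ ℝ let M_{λ,μ} = {E(X(a,b), α e_1 + λb e_2 + (λ a_1 + μ b) e_{2k+2}) : a ∈ ℝ^k, b ∈ ℝ, α ∈ ℝ} ⊆ e(K). Then every maximal abelian subalgebra M of e(K) satisfying {X : E(X,ξ) ∈ M for some ξ} = {X(a,b) : a ∈ ℝ^k, b ∈ ℝ} and M ∩ T(n) = ℝ·E(0,e_1) is conjugate, under conjugation by an element of the group E(K)-grp, to M_{λ,μ} for some (λ,μ)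 ∈ {(0,0), (0,1), (0,−1)} ∪ {(1,μ) : μ ∈ ℝ} (the value (0,0) giving the splitting case). -/
open Matrix

/-- `o(K)`: real matrices `X` with `XK + KXᵀ = 0`. -/
def oK {n : ℕ} (K : Matrix (Fin n) (Fin n) ℝ) : Set (Matrix (Fin n) (Fin n) ℝ) :=
  {X | X * K + K * Xᵀ = 0}

/-- The `(n+1) × (n+1)` matrix `E(X, a)` with block form `[[X, a], [0, 0]]`. -/
def Emat {n : ℕ} (X : Matrix (Fin n) (Fin n) ℝ) (a : Fin n → ℝ) :
    Matrix (Fin (n + 1)) (Fin (n + 1)) ℝ :=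
  Matrix.of fun i j =>
    if hi : i.val < n then
      if hj : j.val < n then X ⟨i.val, hi⟩ ⟨j.val, hj⟩ else a ⟨i.val, hi⟩
    else 0

/-- The Lie algebra `e(K)`, as a set of `(n+1) × (n+1)` matrices. -/
def eK {n : ℕ} (K : Matrix (Fin n) (Fin n) ℝ) :
    Set (Matrix (Fin (n + 1)) (Fin (n + 1)) ℝ) :=
  {m | ∃ X ∈ oK K, ∃ a : Fin n → ℝ, m = Emat X a}

/-- `M` is a maximal abelian subalgebra of the matrix Lie algebra (set) `L`:
it is a linear subspace contained in `L`, its elements pairwise commute, and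
every element of `L` commuting with all of `M` belongs to `M`. -/
def IsMASA {κ : Type*} [Fintype κ] (L M : Set (Matrix κ κ ℝ)) : Prop :=
  M ⊆ L ∧
  (∀ X ∈ M, ∀ Y ∈ M, X * Y = Y * X) ∧
  (0 : Matrix κ κ ℝ) ∈ M ∧
  (∀ X ∈ M, ∀ Y ∈ M, X + Y ∈ M) ∧
  (∀ (c : ℝ), ∀ X ∈ M, c • X ∈ M) ∧
  (∀ Y ∈ L, (∀ X ∈ M, Y * X = X * Y) → Y ∈ M)

/-- The group element of `E(K)` with block form `[[G, a], [0, 1]]`. -/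
def Ggrp {n : ℕ} (G : Matrix (Fin n) (Fin n) ℝ) (a : Fin n → ℝ) :
    Matrix (Fin (n + 1)) (Fin (n + 1)) ℝ :=
  Matrix.of fun i j =>
    if hi : i.val < n then
      if hj : j.val < n then G ⟨i.val, hi⟩ ⟨j.val, hj⟩ else a ⟨i.val, hi⟩
    else
      if j.val < n then 0 else 1

/-- `M` is conjugate to `S` by an element `[[G, a], [0, 1]]` of the group `E(K)`. -/
def ConjTo {n : ℕ} (K : Matrix (Fin n) (Fin n) ℝ)
    (M S : Set (Matrix (Fin (n + 1)) (Fin (n + 1)) ℝ)) : Prop :=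
  ∃ (G : Matrix (Fin n) (Fin n) ℝ) (a : Fin n → ℝ),
    G * K * Gᵀ = K ∧
    M = (fun m => Ggrp G a * m * (Ggrp G a)⁻¹) '' S

/-- The metric `K = diag(F, 1)`, `F` the antidiagonal metric of size `2k+1`. -/
def K2 (k : ℕ) (ε : ℝ) : Matrix (Fin (2 * k + 2)) (Fin (2 * k + 2)) ℝ :=
  Matrix.of fun i j =>
    if i.val < 2 * k + 1 ∧ j.val < 2 * k + 1 then
      (if i.val + j.val = 2 * k then (-1) ^ i.val * ε else 0)
    else if i.val = 2 * k + 1 ∧ j.val = 2 * k + 1 then 1 else 0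

/-- The truncated shift matrix `S`, `S_{i,i+1} = 1` for `1 ≤ i ≤ 2k` (1-indexed). -/
def S2 (k : ℕ) : Matrix (Fin (2 * k + 2)) (Fin (2 * k + 2)) ℝ :=
  Matrix.of fun i j => if j.val = i.val + 1 ∧ j.val ≤ 2 * k then 1 else 0

/-- The matrix `E_{1,2k+2} - ε E_{2k+2,2k+1}` (1-indexed). -/
def B2 (k : ℕ) (ε : ℝ) : Matrix (Fin (2 * k + 2)) (Fin (2 * k + 2)) ℝ :=
  Matrix.of fun i j =>
    if i.val = 0 ∧ j.val = 2 * k + 1 then 1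
    else if i.val = 2 * k + 1 ∧ j.val = 2 * k then -ε else 0

/-- `X(a,b) = Σⱼ aⱼ S^{2j-1} + b(E_{1,2k+2} - ε E_{2k+2,2k+1})`. -/
def X2 (k : ℕ) (ε : ℝ) (a : Fin k → ℝ) (b : ℝ) :
    Matrix (Fin (2 * k + 2)) (Fin (2 * k + 2)) ℝ :=
  (∑ j : Fin k, a j • S2 k ^ (2 * j.val + 1)) + b • B2 k ε

/-- The (possibly nonsplitting) MASA `M_{λ,μ}` with translation parts
`α e₁ + λb e₂ + (λa₁ + μb) e_{2k+2}`. -/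
def Mlm (k : ℕ) (hk : 0 < k) (ε lam mu : ℝ) :
    Set (Matrix (Fin (2 * k + 2 + 1)) (Fin (2 * k + 2 + 1)) ℝ) :=
  {m | ∃ (a : Fin k → ℝ) (b α : ℝ),
    m = Emat (X2 k ε a b)
      (fun i => if i.val = 0 then α else if i.val = 1 then lam * b
        else if i.val = 2 * k + 1 then lam * a ⟨0, hk⟩ + mu * b else 0)}


variable {n : ℕ}

lemma Emat_mul (X Y : Matrix (Fin n) (Fin n) ℝ) (ξ η : Fin n → ℝ) :
    Emat X ξ * Emat Y η = Emat (X * Y) (X *ᵥ η) := by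
  ext i j
  simp only [Matrix.mul_apply, Emat, Matrix.of_apply, Fin.sum_univ_castSucc]
  rcases Nat.lt_or_ge i.val n with hi | hi
  · rcases Nat.lt_or_ge j.val n with hj | hj
    · simp [hi, hj, Fin.is_lt, Matrix.mul_apply, Fin.last, Nat.lt_irrefl]
    · simp [hi, Nat.not_lt.2 hj, Fin.is_lt, Matrix.mulVec, dotProduct,
        Fin.last, Nat.lt_irrefl]
  · simp [Nat.not_lt.2 hi, Fin.last, Nat.lt_irrefl]

lemma Ggrp_mul_Emat (G X : Matrix (Fin n) (Fin n) ℝ) (a ξ : Fin n → ℝ) :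
    Ggrp G a * Emat X ξ = Emat (G * X) (G *ᵥ ξ) := by
  ext i j
  simp only [Matrix.mul_apply, Emat, Ggrp, Matrix.of_apply, Fin.sum_univ_castSucc]
  rcases Nat.lt_or_ge i.val n with hi | hi
  · rcases Nat.lt_or_ge j.val n with hj | hj
    · simp [hi, hj, Fin.is_lt, Matrix.mul_apply, Fin.last, Nat.lt_irrefl]
    · simp [hi, Nat.not_lt.2 hj, Fin.is_lt, Matrix.mulVec, dotProduct,
        Fin.last, Nat.lt_irrefl]
  · simp [Nat.not_lt.2 hi, Fin.last, Nat.lt_irrefl]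

lemma Emat_mul_Ggrp (X H : Matrix (Fin n) (Fin n) ℝ) (ξ b : Fin n → ℝ) :
    Emat X ξ * Ggrp H b = Emat (X * H) (X *ᵥ b + ξ) := by
  ext i j
  simp only [Matrix.mul_apply, Emat, Ggrp, Matrix.of_apply, Fin.sum_univ_castSucc]
  rcases Nat.lt_or_ge i.val n with hi | hi
  · rcases Nat.lt_or_ge j.val n with hj | hj
    · simp [hi, hj, Fin.is_lt, Matrix.mul_apply, Fin.last, Nat.lt_irrefl]
    · simp [hi, Nat.not_lt.2 hj, Fin.is_lt, Matrix.mulVec, dotProduct,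
        Fin.last, Nat.lt_irrefl]
  · simp [Nat.not_lt.2 hi, Fin.last, Nat.lt_irrefl]

lemma Ggrp_mul_Ggrp (G H : Matrix (Fin n) (Fin n) ℝ) (a b : Fin n → ℝ) :
    Ggrp G a * Ggrp H b = Ggrp (G * H) (G *ᵥ b + a) := by
  ext i j
  simp only [Matrix.mul_apply, Ggrp, Matrix.of_apply, Fin.sum_univ_castSucc]
  rcases Nat.lt_or_ge i.val n with hi | hi
  · rcases Nat.lt_or_ge j.val n with hj | hj
    · simp [hi, hj, Fin.is_lt, Matrix.mul_apply, Fin.last, Nat.lt_irrefl]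
    · simp [hi, Nat.not_lt.2 hj, Fin.is_lt, Matrix.mulVec, dotProduct,
        Fin.last, Nat.lt_irrefl]
  · rcases Nat.lt_or_ge j.val n with hj | hj
    · simp [Nat.not_lt.2 hi, hj, Fin.is_lt, Fin.last, Nat.lt_irrefl]
    · simp [Nat.not_lt.2 hi, Nat.not_lt.2 hj, Fin.last, Nat.lt_irrefl, Fin.is_lt]

lemma Ggrp_one : Ggrp (1 : Matrix (Fin n) (Fin n) ℝ) 0 = 1 := by
  ext i j
  simp only [Ggrp, Matrix.of_apply, Matrix.one_apply]
  rcases Nat.lt_or_ge i.val n with hi | hi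
  · rcases Nat.lt_or_ge j.val n with hj | hj
    · by_cases h : i = j
      · simp [hi, hj, h, Matrix.one_apply]
      · have hv : ¬ (i.val = j.val) := fun hh => h (Fin.ext hh)
        simp [hi, hj, h, Matrix.one_apply, hv]
    · have : i ≠ j := by intro h; subst h; omega
      simp [hi, Nat.not_lt.2 hj, this]
  · rcases Nat.lt_or_ge j.val n with hj | hj
    · have : i ≠ j := by intro h; subst h; omega
      simp [Nat.not_lt.2 hi, hj, this]
    · have : i = j := by
        have hi' : i.val = n := by omega
        have hj' : j.val = n := by omega
        exact Fin.ext (hi'.trans hj'.symm)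
      simp [Nat.not_lt.2 hi, Nat.not_lt.2 hj, this]

lemma Emat_inj {X Y : Matrix (Fin n) (Fin n) ℝ} {ξ η : Fin n → ℝ}
    (h : Emat X ξ = Emat Y η) : X = Y ∧ ξ = η := by
  constructor
  · ext i j
    have := congrFun (congrFun h ⟨i.val, by omega⟩) ⟨j.val, by omega⟩
    simpa [Emat, i.is_lt, j.is_lt] using this
  · ext i
    have := congrFun (congrFun h ⟨i.val, by omega⟩) ⟨n, by omega⟩
    simpa [Emat, i.is_lt] using this

lemma Emat_add (X Y : Matrix (Fin n) (Fin n) ℝ) (ξ η : Fin n → ℝ) :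
    Emat X ξ + Emat Y η = Emat (X + Y) (ξ + η) := by
  ext i j
  rcases Nat.lt_or_ge i.val n with hi | hi
  · rcases Nat.lt_or_ge j.val n with hj | hj
    · simp [Emat, hi, hj]
    · simp [Emat, hi, Nat.not_lt.2 hj]
  · simp [Emat, Nat.not_lt.2 hi]

lemma Emat_smul (c : ℝ) (X : Matrix (Fin n) (Fin n) ℝ) (ξ : Fin n → ℝ) :
    c • Emat X ξ = Emat (c • X) (c • ξ) := by
  ext i j
  rcases Nat.lt_or_ge i.val n with hi | hi
  · rcases Nat.lt_or_ge j.val n with hj | hj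
    · simp [Emat, hi, hj]
    · simp [Emat, hi, Nat.not_lt.2 hj]
  · simp [Emat, Nat.not_lt.2 hi]

lemma Emat_sum {m : ℕ} (A : Fin m → Matrix (Fin n) (Fin n) ℝ)
    (w : Fin m → Fin n → ℝ) (a : Fin m → ℝ) :
    ∑ j : Fin m, a j • Emat (A j) (w j)
      = Emat (∑ j : Fin m, a j • A j) (∑ j : Fin m, a j • w j) := by
  induction m with
  | zero =>
    simp [Emat]
    ext i j
    rcases Nat.lt_or_ge i.val n with hi | hi
    · rcases Nat.lt_or_ge j.val n with hj | hj
      · simp [Emat, hi, hj]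
      · simp [Emat, hi, Nat.not_lt.2 hj]
    · simp [Emat, Nat.not_lt.2 hi]
  | succ m ih =>
    rw [Fin.sum_univ_castSucc, Fin.sum_univ_castSucc (f := fun j => a j • A j),
      Fin.sum_univ_castSucc (f := fun j => a j • w j), ih, Emat_smul, Emat_add]

lemma S2_pow_apply (k m : ℕ) (i j : Fin (2 * k + 2)) :
    (S2 k ^ (m + 1)) i j
      = if j.val = i.val + (m + 1) ∧ j.val ≤ 2 * k then 1 else 0 := by
  induction m generalizing i j with
  | zero => simp [S2, pow_one]
  | succ m ih =>
    rw [pow_succ, Matrix.mul_apply]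
    simp only [ih]
    simp only [S2, Matrix.of_apply]
    rcases Nat.lt_or_ge (i.val + (m + 1)) (2 * k + 2) with h | h
    · rw [Finset.sum_eq_single (⟨i.val + (m + 1), h⟩ : Fin (2 * k + 2))]
      · by_cases h1 : i.val + (m + 1) ≤ 2 * k
        · by_cases h2 : j.val = i.val + (m + 2) ∧ j.val ≤ 2 * k
          · have h3 : j.val = (i.val + (m+1)) + 1 ∧ j.val ≤ 2 * k := by omega
            have h4 : ((i.val + (m+2) = i.val + (m+1) + 1 ∧ i.val + (m+2) ≤ 2*k))
                ↔ (i.val + (m+2) ≤ 2*k) := by omega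
            simp [h1, h2, h3, h4]
          · have h3 : ¬ (j.val = (i.val + (m+1)) + 1 ∧ j.val ≤ 2 * k) := by omega
            simp [h1, h2, h3]
        · have h2 : ¬ (j.val = i.val + (m + 2) ∧ j.val ≤ 2 * k) := by omega
          have h3 : ¬ (i.val + (m + 1) = i.val + (m + 1) ∧ i.val + (m + 1) ≤ 2 * k) := by
            omega
          simp [h1, if_neg h2]
      · intro b _ hb
        have : ¬ (b.val = i.val + (m + 1) ∧ b.val ≤ 2 * k) := by
          intro hc
          exact hb (Fin.ext hc.1)
        simp [this]
      · simp
    · have h2 : ¬ (j.val = i.val + (m + 2) ∧ j.val ≤ 2 * k) := by omega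
      rw [if_neg h2]
      apply Finset.sum_eq_zero
      intro b _
      have : ¬ (b.val = i.val + (m + 1) ∧ b.val ≤ 2 * k) := by omega
      simp [this]

lemma S2_pow_mulVec (k m : ℕ) (w : Fin (2 * k + 2) → ℝ) (i : Fin (2 * k + 2)) :
    ((S2 k ^ (m + 1)) *ᵥ w) i
      = if h : i.val + (m + 1) ≤ 2 * k then w ⟨i.val + (m + 1), by omega⟩ else 0 := by
  rw [Matrix.mulVec, dotProduct]
  simp only [S2_pow_apply]
  by_cases h : i.val + (m + 1) ≤ 2 * k
  · rw [dif_pos h, Finset.sum_eq_single (⟨i.val + (m + 1), by omega⟩ : Fin (2 * k + 2))]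
    · simp [h]
    · intro b _ hb
      have : ¬ (b.val = i.val + (m + 1) ∧ b.val ≤ 2 * k) := by
        intro hc; exact hb (Fin.ext hc.1)
      simp [this]
    · simp
  · rw [dif_neg h]
    apply Finset.sum_eq_zero
    intro b _
    have : ¬ (b.val = i.val + (m + 1) ∧ b.val ≤ 2 * k) := by omega
    simp [this]

lemma B2_mulVec (k : ℕ) (ε : ℝ) (w : Fin (2 * k + 2) → ℝ) (i : Fin (2 * k + 2)) :
    (B2 k ε *ᵥ w) i
      = if i.val = 0 then w ⟨2 * k + 1, by omega⟩
        else if i.val = 2 * k + 1 then -ε * w ⟨2 * k, by omega⟩ else 0 := by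
  rw [Matrix.mulVec, dotProduct]
  simp only [B2, Matrix.of_apply]
  by_cases h0 : i.val = 0
  · rw [if_pos h0, Finset.sum_eq_single (⟨2 * k + 1, by omega⟩ : Fin (2 * k + 2))]
    · simp [h0]
    · intro b _ hb
      have h1 : ¬ (i.val = 0 ∧ b.val = 2 * k + 1) := by
        intro hc; exact hb (Fin.ext hc.2)
      have h2 : ¬ (i.val = 2 * k + 1) := by omega
      simp [h1, h2, show b.val ≠ 2 * k + 1 from fun hc => hb (Fin.ext hc)]
    · simp
  · rw [if_neg h0]
    by_cases h1 : i.val = 2 * k + 1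
    · rw [if_pos h1, Finset.sum_eq_single (⟨2 * k, by omega⟩ : Fin (2 * k + 2))]
      · simp [h0, h1]
      · intro b _ hb
        have h2 : ¬ (b.val = 2 * k) := fun hc => hb (Fin.ext hc)
        simp [h0, h2]
      · simp
    · rw [if_neg h1]
      apply Finset.sum_eq_zero
      intro b _
      simp [h0, h1]

lemma X2_apply (k : ℕ) (ε : ℝ) (a : Fin k → ℝ) (b : ℝ) (i j : Fin (2 * k + 2)) :
    X2 k ε a b i j
      = (∑ l : Fin k, a l * (S2 k ^ (2 * l.val + 1)) i j) + b * B2 k ε i j := by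
  simp [X2, Matrix.sum_apply]

lemma X2_mulVec (k : ℕ) (ε : ℝ) (a : Fin k → ℝ) (b : ℝ) (w : Fin (2 * k + 2) → ℝ)
    (i : Fin (2 * k + 2)) :
    (X2 k ε a b *ᵥ w) i
      = (∑ j : Fin k, a j * ((S2 k ^ (2 * j.val + 1)) *ᵥ w) i) + b * (B2 k ε *ᵥ w) i := by
  rw [Matrix.mulVec, dotProduct]
  simp only [X2_apply, add_mul, Finset.sum_add_distrib, Finset.sum_mul]
  congr 1
  · rw [Finset.sum_comm]
    refine Finset.sum_congr rfl fun j _ => ?_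
    rw [Matrix.mulVec, dotProduct, Finset.mul_sum]
    refine Finset.sum_congr rfl fun l _ => by ring
  · rw [Matrix.mulVec, dotProduct, Finset.mul_sum]
    refine Finset.sum_congr rfl fun l _ => by ring


def e0v (k : ℕ) (α : ℝ) : Fin (2 * k + 2) → ℝ := fun i => if i.val = 0 then α else 0

def phiV (k : ℕ) (uu : Fin k → Fin (2 * k + 2) → ℝ) (vv : Fin (2 * k + 2) → ℝ)
    (a : Fin k → ℝ) (b α : ℝ) : Fin (2 * k + 2) → ℝ :=
  (∑ j : Fin k, a j • uu j) + b • vv + e0v k α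

lemma X2_single (k : ℕ) (ε : ℝ) (j : Fin k) :
    X2 k ε (Pi.single j 1) 0 = S2 k ^ (2 * j.val + 1) := by
  rw [X2]
  rw [Finset.sum_eq_single j]
  · simp
  · intro l _ hl
    simp [Pi.single_apply, hl]
  · simp

lemma X2_B (k : ℕ) (ε : ℝ) : X2 k ε 0 1 = B2 k ε := by
  simp [X2]

lemma phiV_add_e0 (k : ℕ) (uu : Fin k → Fin (2 * k + 2) → ℝ) (vv : Fin (2 * k + 2) → ℝ)
    (a : Fin k → ℝ) (b c : ℝ) :
    phiV k uu vv a b 0 + e0v k c = phiV k uu vv a b c := by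
  funext i
  simp [phiV, e0v]

set_option maxHeartbeats 2000000 in
lemma key (k : ℕ) (hk : 0 < k) (ε : ℝ) (hε0 : ε ≠ 0)
    (M : Set (Matrix (Fin (2 * k + 2 + 1)) (Fin (2 * k + 2 + 1)) ℝ))
    (uu : Fin k → Fin (2 * k + 2) → ℝ) (vv : Fin (2 * k + 2) → ℝ)
    (hchar : M = {m | ∃ (a : Fin k → ℝ) (b α : ℝ),
      m = Emat (X2 k ε a b) (phiV k uu vv a b α)})
    (Ru : ∀ j l : Fin k, (S2 k ^ (2 * j.val + 1)) *ᵥ uu l = (S2 k ^ (2 * l.val + 1)) *ᵥ uu j)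
    (Rv : ∀ j : Fin k, (S2 k ^ (2 * j.val + 1)) *ᵥ vv = B2 k ε *ᵥ uu j) :
    ∃ lam mu : ℝ,
      ((lam = 0 ∧ (mu = 0 ∨ mu = 1 ∨ mu = -1)) ∨ lam = 1) ∧
      ConjTo (K2 k ε) M (Mlm k hk ε lam mu) := by
  have hj0 : ((⟨0, hk⟩ : Fin k) : ℕ) = 0 := rfl
  -- component facts
  have Fv : ∀ s : ℕ, 2 ≤ s → ∀ hs : s ≤ 2 * k, vv ⟨s, by omega⟩ = 0 := by
    intro s h1 h2
    have h := congrFun (Rv ⟨0, hk⟩) ⟨s - 1, by omega⟩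
    rw [S2_pow_mulVec, B2_mulVec] at h
    simp only [hj0, Fin.val_mk] at h
    rw [dif_pos (by omega : (s:ℕ) - 1 + (2 * 0 + 1) ≤ 2 * k)] at h
    rw [if_neg (by omega : ¬ (s - 1 = 0))] at h
    rw [if_neg (by omega : ¬ (s - 1 = 2*k+1))] at h
    have he : (⟨s - 1 + (2*0+1), by omega⟩ : Fin (2*k+2))
        = ⟨s, by omega⟩ := by
      apply Fin.ext; simp; omega
    rwa [he] at h
  have F2 : uu ⟨0, hk⟩ ⟨2 * k + 1, by omega⟩ = vv ⟨1, by omega⟩ := by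
    have h := congrFun (Rv ⟨0, hk⟩) ⟨0, by omega⟩
    rw [S2_pow_mulVec, B2_mulVec] at h
    simp only [hj0, Fin.val_mk] at h
    rw [dif_pos (by omega : 0 + (2 * 0 + 1) ≤ 2 * k)] at h
    rw [if_pos trivial] at h
    have he : (⟨0 + (2*0+1), by omega⟩ : Fin (2*k+2)) = ⟨1, by omega⟩ := by
      apply Fin.ext; simp
    rw [he] at h
    exact h.symm
  have F3 : ∀ j : Fin k, 1 ≤ j.val → uu j ⟨2 * k + 1, by omega⟩ = 0 := by
    intro j hj
    have h := congrFun (Rv j) ⟨0, by omega⟩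
    rw [S2_pow_mulVec, B2_mulVec] at h
    simp only [Fin.val_mk] at h
    rw [dif_pos (by omega : 0 + (2 * j.val + 1) ≤ 2 * k)] at h
    rw [if_pos trivial] at h
    have he : (⟨0 + (2 * j.val + 1), by omega⟩ : Fin (2*k+2))
        = ⟨2 * j.val + 1, by omega⟩ := by
      apply Fin.ext; simp
    rw [he] at h
    rw [Fv (2 * j.val + 1) (by omega) (by omega)] at h
    exact h.symm
  have F4 : ∀ j : Fin k, uu j ⟨2 * k, by omega⟩ = 0 := by
    intro j
    have h := congrFun (Rv j) ⟨2 * k + 1, by omega⟩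
    rw [S2_pow_mulVec, B2_mulVec] at h
    simp only [Fin.val_mk] at h
    rw [dif_neg (by omega : ¬ (2 * k + 1 + (2 * j.val + 1) ≤ 2 * k))] at h
    rw [if_neg (by omega : ¬ (2 * k + 1 = 0)), if_pos trivial] at h
    have h2 : ε * uu j ⟨2 * k, by omega⟩ = 0 := by linarith [h]
    rcases mul_eq_zero.1 h2 with h3 | h3
    · exact absurd h3 hε0
    · exact h3
  have F5 : ∀ (j : Fin k) (s : ℕ), 1 ≤ s → ∀ hs : s ≤ 2 * k,
      uu j ⟨s, by omega⟩ = if h : s + 2 * j.val ≤ 2 * k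
        then uu ⟨0, hk⟩ ⟨s + 2 * j.val, by omega⟩ else 0 := by
    intro j s h1 h2
    have h := congrFun (Ru ⟨0, hk⟩ j) ⟨s - 1, by omega⟩
    rw [S2_pow_mulVec, S2_pow_mulVec] at h
    simp only [hj0, Fin.val_mk] at h
    rw [dif_pos (by omega : s - 1 + (2 * 0 + 1) ≤ 2 * k)] at h
    have he : (⟨s - 1 + (2*0+1), by omega⟩ : Fin (2*k+2)) = ⟨s, by omega⟩ := by
      apply Fin.ext; simp; omega
    rw [he] at h
    rw [h]
    by_cases hc : s + 2 * j.val ≤ 2 * k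
    · rw [dif_pos (by omega : s - 1 + (2 * j.val + 1) ≤ 2 * k), dif_pos hc]
      congr 1
      apply Fin.ext; simp; omega
    · rw [dif_neg (by omega : ¬ (s - 1 + (2 * j.val + 1) ≤ 2 * k)), dif_neg hc]
  -- scalar data
  set u0 : Fin (2 * k + 2) → ℝ := uu ⟨0, hk⟩ with hu0def
  set lam : ℝ := vv ⟨1, by omega⟩ with hlamdef
  set mu : ℝ := vv ⟨2 * k + 1, by omega⟩ with hmudef
  set mu0 : ℝ := mu + ε * u0 ⟨2 * k - 1, by omega⟩ with hmu0def
  set r : ℝ := if lam = 0 then (if mu0 = 0 then 1 else |mu0| ^ (-(1:ℝ)/(k:ℝ))) else lam⁻¹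
    with hrdef
  have hrne : r ≠ 0 := by
    rw [hrdef]
    by_cases hl : lam = 0
    · rw [if_pos hl]
      by_cases hm : mu0 = 0
      · rw [if_pos hm]; norm_num
      · rw [if_neg hm]
        exact ne_of_gt (Real.rpow_pos_of_pos (abs_pos.mpr hm) _)
    · rw [if_neg hl]; exact inv_ne_zero hl
  have hrk : lam = 0 → mu0 ≠ 0 → (r : ℝ) ^ k = |mu0|⁻¹ := by
    intro hl hm
    rw [hrdef, if_pos hl, if_neg hm]
    rw [← Real.rpow_natCast (|mu0| ^ (-(1:ℝ)/(k:ℝ))) k, ← Real.rpow_mul (abs_nonneg _)]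
    have : (-(1:ℝ)/(k:ℝ)) * (k : ℝ) = -1 := by
      field_simp
    rw [this, Real.rpow_neg_one]
  have hbranch : ((lam * r = 0 ∧ (r ^ k * mu0 = 0 ∨ r ^ k * mu0 = 1 ∨ r ^ k * mu0 = -1))
      ∨ lam * r = 1) := by
    by_cases hl : lam = 0
    · left
      refine ⟨by rw [hl, zero_mul], ?_⟩
      by_cases hm : mu0 = 0
      · left; rw [hm, mul_zero]
      · rw [hrk hl hm]
        rcases lt_trichotomy mu0 0 with h | h | h
        · right; right; rw [abs_of_neg h]; field_simp
        · exact absurd h hm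
        · right; left; rw [abs_of_pos h]; field_simp
    · right
      rw [hrdef, if_neg hl]
      exact mul_inv_cancel₀ hl
  -- primed component facts (at arbitrary Fin index)
  have Fv' : ∀ i : Fin (2 * k + 2), 2 ≤ i.val → i.val ≤ 2 * k → vv i = 0 :=
    fun i hx hy => Fv i.val hx hy
  have F5' : ∀ (j : Fin k) (i : Fin (2 * k + 2)), 1 ≤ i.val → i.val ≤ 2 * k →
      uu j i = if h : i.val + 2 * j.val ≤ 2 * k
        then u0 ⟨i.val + 2 * j.val, by omega⟩ else 0 :=
    fun j i hx hy => F5 j i.val hx hy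
  have F3' : ∀ j : Fin k, 1 ≤ j.val → ∀ i : Fin (2 * k + 2), i.val = 2 * k + 1 →
      uu j i = 0 := by
    intro j hj i hi
    rw [show i = ⟨2 * k + 1, by omega⟩ from Fin.ext hi]
    exact F3 j hj
  -- the diagonal conjugating matrix
  set g : Fin (2 * k + 2) → ℝ :=
    fun i => if i.val = 2 * k + 1 then 1 else r ^ k / r ^ (i.val) with hgdef
  have hgne : ∀ i, g i ≠ 0 := by
    intro i
    rw [hgdef]
    dsimp only
    split
    · norm_num
    · exact div_ne_zero (pow_ne_zero _ hrne) (pow_ne_zero _ hrne)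
  set cvec : Fin (2 * k + 2) → ℝ :=
    fun i => if 2 ≤ i.val ∧ i.val ≤ 2 * k
      then -(u0 ⟨i.val - 1, lt_of_le_of_lt (Nat.sub_le _ _) i.isLt⟩) else 0 with hcdef
  have hK : Matrix.diagonal g * K2 k ε * (Matrix.diagonal g)ᵀ = K2 k ε := by
    rw [Matrix.diagonal_transpose]
    ext i j
    rw [Matrix.mul_diagonal, Matrix.diagonal_mul]
    rcases Nat.lt_or_ge i.val (2 * k + 1) with hi | hi
    · rcases Nat.lt_or_ge j.val (2 * k + 1) with hj | hj
      · by_cases hd : i.val + j.val = 2 * k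
        · have hgi : g i = r ^ k / r ^ (i.val) := by
            rw [hgdef]; dsimp only; rw [if_neg (by omega)]
          have hgj : g j = r ^ k / r ^ (j.val) := by
            rw [hgdef]; dsimp only; rw [if_neg (by omega)]
          have hprod : g i * g j = 1 := by
            rw [hgi, hgj]
            rw [div_mul_div_comm, ← pow_add, ← pow_add, hd]
            rw [show k + k = 2 * k by ring]
            exact div_self (pow_ne_zero _ hrne)
          simp only [K2, Matrix.of_apply, if_pos (And.intro hi hj), if_pos hd]
          have hre : g i * ((-1:ℝ)^i.val * ε) * g j = ((-1:ℝ)^i.val * ε) * (g i * g j) := by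
            ring
          rw [hre, hprod, mul_one]
        · simp [K2, hi, hj, hd, show i.val ≤ 2*k by omega, show j.val ≤ 2*k by omega]
      · have : ¬ (i.val < 2*k+1 ∧ j.val < 2*k+1) := by omega
        have h2 : ¬ (i.val = 2*k+1 ∧ j.val = 2*k+1) := by omega
        simp [K2, this, h2, show ¬ j.val ≤ 2*k by omega]
    · rcases Nat.lt_or_ge j.val (2 * k + 1) with hj | hj
      · have : ¬ (i.val < 2*k+1 ∧ j.val < 2*k+1) := by omega
        have h2 : ¬ (i.val = 2*k+1 ∧ j.val = 2*k+1) := by omega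
        simp [K2, this, h2, show ¬ i.val ≤ 2*k by omega]
      · have hi' : i.val = 2*k+1 := by omega
        have hj' : j.val = 2*k+1 := by omega
        have : ¬ (i.val < 2*k+1 ∧ j.val < 2*k+1) := by omega
        have hgi : g i = 1 := by rw [hgdef]; dsimp only; rw [if_pos hi']
        have hgj : g j = 1 := by rw [hgdef]; dsimp only; rw [if_pos hj']
        simp [K2, this, hi', hj', hgi, hgj]
  have hGG' : Matrix.diagonal g * Matrix.diagonal (fun i => (g i)⁻¹) = 1 := by
    rw [Matrix.diagonal_mul_diagonal]
    have hfun : (fun i => g i * (g i)⁻¹) = fun _ : Fin (2*k+2) => (1:ℝ) :=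
      funext fun i => mul_inv_cancel₀ (hgne i)
    rw [hfun, Matrix.diagonal_one]
  have hcommD : ∀ (a' : Fin k → ℝ) (b' : ℝ),
      Matrix.diagonal g * X2 k ε a' b'
        = X2 k ε (fun j => r ^ (2 * j.val + 1) * a' j) (r ^ k * b') * Matrix.diagonal g := by
    intro a' b'
    ext i j
    rw [Matrix.diagonal_mul, Matrix.mul_diagonal, X2_apply, X2_apply]
    rw [mul_add, add_mul, Finset.mul_sum, Finset.sum_mul]
    congr 1
    · refine Finset.sum_congr rfl fun l _ => ?_
      rw [S2_pow_apply]
      by_cases hc : j.val = i.val + (2 * l.val + 1) ∧ j.val ≤ 2 * k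
      · rw [if_pos hc]
        have hgi : g i = r ^ k / r ^ (i.val) := by
          rw [hgdef]; dsimp only; rw [if_neg (by omega)]
        have hgj : g j = r ^ k / r ^ (j.val) := by
          rw [hgdef]; dsimp only; rw [if_neg (by omega)]
        rw [hc.1] at hgj
        rw [hgi, hgj, pow_add]
        have h1 : r ^ i.val ≠ 0 := pow_ne_zero _ hrne
        have h2 : r ^ (2 * l.val) ≠ 0 := pow_ne_zero _ hrne
        rw [pow_add]
        field_simp
        ring
      · rw [if_neg hc]
        ring
    · unfold B2
      rcases Nat.lt_or_ge i.val (2 * k + 1) with hi | hi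
      · by_cases hc : i.val = 0 ∧ j.val = 2 * k + 1
        · have hgi : g i = r ^ k / r ^ (i.val) := by
            rw [hgdef]; dsimp only; rw [if_neg (by omega)]
          have hgj : g j = 1 := by
            rw [hgdef]; dsimp only; rw [if_pos hc.2]
          simp only [Matrix.of_apply, if_pos hc, hgi, hgj, hc.1]
          field_simp
        · have hc2 : ¬ (i.val = 2 * k + 1 ∧ j.val = 2 * k) := by omega
          simp only [Matrix.of_apply, if_neg hc, if_neg hc2]
          ring
      · have hi' : i.val = 2 * k + 1 := by omega
        have hc : ¬ (i.val = 0 ∧ j.val = 2 * k + 1) := by omega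
        by_cases hc2 : i.val = 2 * k + 1 ∧ j.val = 2 * k
        · have hgi : g i = 1 := by
            rw [hgdef]; dsimp only; rw [if_pos hi']
          have hgj : g j = r ^ k / r ^ (j.val) := by
            rw [hgdef]; dsimp only; rw [if_neg (by omega)]
          simp only [Matrix.of_apply, if_neg hc, if_pos hc2, hgi, hgj, hc2.2]
          rw [if_neg (by omega : ¬ (i.val = 0 ∧ 2 * k = 2 * k + 1)),
            if_pos (And.intro hi' trivial)]
          have h1 : r ^ k ≠ 0 := pow_ne_zero _ hrne
          rw [show 2 * k = k + k by ring, pow_add]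
          field_simp
        · simp only [Matrix.of_apply, if_neg hc, if_neg hc2]
          ring
  have hQinv : (Ggrp (Matrix.diagonal g) cvec)⁻¹
      = Ggrp (Matrix.diagonal (fun i => (g i)⁻¹))
          (-(Matrix.diagonal (fun i => (g i)⁻¹) *ᵥ cvec)) := by
    apply Matrix.inv_eq_right_inv
    rw [Ggrp_mul_Ggrp, hGG']
    have hv : Matrix.diagonal g *ᵥ (-(Matrix.diagonal (fun i => (g i)⁻¹) *ᵥ cvec)) + cvec
        = 0 := by
      rw [Matrix.mulVec_neg, Matrix.mulVec_mulVec, hGG', Matrix.one_mulVec]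
      exact neg_add_cancel cvec
    rw [hv, Ggrp_one]
  have hconj : ∀ (a' : Fin k → ℝ) (b' : ℝ) (w' : Fin (2 * k + 2) → ℝ),
      Ggrp (Matrix.diagonal g) cvec * Emat (X2 k ε a' b') w'
          * (Ggrp (Matrix.diagonal g) cvec)⁻¹
        = Emat (X2 k ε (fun j => r ^ (2 * j.val + 1) * a' j) (r ^ k * b'))
            (Matrix.diagonal g *ᵥ w'
              - X2 k ε (fun j => r ^ (2 * j.val + 1) * a' j) (r ^ k * b') *ᵥ cvec) := by
    intro a' b' w'
    rw [hQinv, Ggrp_mul_Emat, Emat_mul_Ggrp, hcommD a' b']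
    rw [Matrix.mul_assoc, hGG', Matrix.mul_one]
    congr 1
    rw [Matrix.mulVec_neg, Matrix.mulVec_mulVec, Matrix.mul_assoc, hGG', Matrix.mul_one,
      neg_add_eq_sub]
  have CE : ∀ (a' : Fin k → ℝ) (b' α' : ℝ),
      Matrix.diagonal g *ᵥ (fun i : Fin (2 * k + 2) =>
          if i.val = 0 then α' else if i.val = 1 then (lam * r) * b'
          else if i.val = 2 * k + 1 then (lam * r) * a' ⟨0, hk⟩ + (r ^ k * mu0) * b' else 0)
        - X2 k ε (fun j => r ^ (2 * j.val + 1) * a' j) (r ^ k * b') *ᵥ cvec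
      = phiV k uu vv (fun j => r ^ (2 * j.val + 1) * a' j) (r ^ k * b')
          (g ⟨0, by omega⟩ * α'
            - (X2 k ε (fun j => r ^ (2 * j.val + 1) * a' j) (r ^ k * b') *ᵥ cvec)
                ⟨0, by omega⟩
            - (∑ j : Fin k, (r ^ (2 * j.val + 1) * a' j) * uu j ⟨0, by omega⟩)
            - (r ^ k * b') * vv ⟨0, by omega⟩) := by
    intro a' b' α'
    funext i
    rw [Pi.sub_apply, Matrix.mulVec_diagonal]
    have hph : ∀ α : ℝ, phiV k uu vv (fun j => r ^ (2 * j.val + 1) * a' j) (r ^ k * b') α i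
        = (∑ j : Fin k, (r ^ (2 * j.val + 1) * a' j) * uu j i)
          + (r ^ k * b') * vv i + (if i.val = 0 then α else 0) := by
      intro α
      rw [phiV]
      rw [Pi.add_apply, Pi.add_apply, Finset.sum_apply]
      simp only [Pi.smul_apply, smul_eq_mul, e0v]
    rw [hph]
    by_cases h0 : i.val = 0
    · rw [if_pos h0, if_pos h0]
      have hi : (⟨0, by omega⟩ : Fin (2 * k + 2)) = i := Fin.ext h0.symm
      rw [hi]
      ring
    · by_cases h1 : i.val = 1
      · rw [if_neg h0, if_pos h1, if_neg h0]
        rw [X2_mulVec]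
        have hB : (B2 k ε *ᵥ cvec) i = 0 := by
          rw [B2_mulVec, if_neg (by omega), if_neg (by omega)]
        have hterm : ∀ j : Fin k,
            ((S2 k ^ (2 * j.val + 1)) *ᵥ cvec) i = -(uu j i) := by
          intro j
          have hj := j.isLt
          rw [S2_pow_mulVec, dif_pos (by omega : i.val + (2 * j.val + 1) ≤ 2 * k)]
          rw [F5' j i (by omega) (by omega), dif_pos (by omega)]
          simp only [hcdef, Fin.val_mk]
          rw [if_pos (by constructor <;> omega)]
          exact congrArg (fun x : Fin (2 * k + 2) => -(u0 x)) (Fin.ext (by simp only [Fin.val_mk]; omega))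
        simp only [hterm]
        have hv : vv i = lam := by rw [hlamdef]; exact congrArg vv (Fin.ext h1)
        rw [hv, hB]
        have hg : g i = r ^ k / r ^ 1 := by
          rw [hgdef]; dsimp only; rw [if_neg (by omega), h1]
        rw [hg]
        simp only [mul_neg]
        rw [Finset.sum_neg_distrib]
        field_simp
        ring
      · by_cases htop : i.val = 2 * k + 1
        · rw [if_neg h0, if_neg h1, if_pos htop, if_neg h0]
          rw [X2_mulVec]
          have hterm : ∀ j : Fin k, ((S2 k ^ (2 * j.val + 1)) *ᵥ cvec) i = 0 := by
            intro j
            rw [S2_pow_mulVec, dif_neg (by omega)]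
          simp only [hterm, mul_zero]
          rw [Finset.sum_const_zero]
          have hB : (B2 k ε *ᵥ cvec) i = ε * u0 ⟨2 * k - 1, by omega⟩ := by
            rw [B2_mulVec, if_neg (by omega), if_pos htop]
            simp only [hcdef, Fin.val_mk]
            rw [if_pos (by constructor <;> omega)]
            have he : (⟨2 * k - 1, by omega⟩ : Fin (2 * k + 2))
                = ⟨2 * k - 1, by omega⟩ := rfl
            ring_nf
          rw [hB]
          have hsum : ∑ j : Fin k, (r ^ (2 * j.val + 1) * a' j) * uu j i
              = (r ^ (2 * (⟨0, hk⟩ : Fin k).val + 1) * a' ⟨0, hk⟩) * uu ⟨0, hk⟩ i := by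
            rw [Finset.sum_eq_single (⟨0, hk⟩ : Fin k)]
            · intro j _ hj
              have hj1 : 1 ≤ j.val := by
                rcases Nat.eq_zero_or_pos j.val with hz | hp
                · exact absurd (Fin.ext (hz.trans hj0.symm)) hj
                · exact hp
              rw [F3' j hj1 i htop, mul_zero]
            · intro hmem
              exact absurd (Finset.mem_univ _) hmem
          rw [hsum]
          have hu00 : uu ⟨0, hk⟩ i = lam := by
            rw [← F2, hu0def]
            exact congrArg (uu ⟨0, hk⟩) (Fin.ext (by simp [htop]))
          rw [hu00]
          have hv : vv i = mu := by rw [hmudef]; exact congrArg vv (Fin.ext htop)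
          rw [hv]
          have hg : g i = 1 := by rw [hgdef]; dsimp only; rw [if_pos htop]
          rw [hg, hj0, hmu0def]
          ring
        · have h2 : 2 ≤ i.val := by omega
          have hik := i.isLt
          have h2k : i.val ≤ 2 * k := by omega
          rw [if_neg h0, if_neg h1, if_neg htop, if_neg h0]
          rw [X2_mulVec]
          have hB : (B2 k ε *ᵥ cvec) i = 0 := by
            rw [B2_mulVec, if_neg h0, if_neg htop]
          have hv : vv i = 0 := Fv' i h2 h2k
          have hterm : ∀ j : Fin k,
              (r ^ (2 * j.val + 1) * a' j) * ((S2 k ^ (2 * j.val + 1)) *ᵥ cvec) i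
              = -((r ^ (2 * j.val + 1) * a' j) * uu j i) := by
            intro j
            have hj := j.isLt
            rw [S2_pow_mulVec, F5' j i (by omega) h2k]
            by_cases hc : i.val + (2 * j.val + 1) ≤ 2 * k
            · rw [dif_pos hc, dif_pos (by omega)]
              simp only [hcdef, Fin.val_mk]
              rw [if_pos (by constructor <;> omega)]
              have he : (⟨i.val + (2 * j.val + 1) - 1, by omega⟩ : Fin (2 * k + 2))
                  = ⟨i.val + 2 * j.val, by omega⟩ := Fin.ext (by simp only [Fin.val_mk]; omega)
              rw [he]
              ring
            · rw [dif_neg hc]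
              by_cases hc2 : i.val + 2 * j.val ≤ 2 * k
              · rw [dif_pos hc2]
                have he : (⟨i.val + 2 * j.val, by omega⟩ : Fin (2 * k + 2))
                    = ⟨2 * k, by omega⟩ := Fin.ext (by simp; omega)
                rw [he, hu0def, F4]
                ring
              · rw [dif_neg hc2]
                ring
          rw [Finset.sum_congr rfl (fun j _ => hterm j), Finset.sum_neg_distrib]
          rw [hB, hv]
          ring
  refine ⟨lam * r, r ^ k * mu0, hbranch, Matrix.diagonal g, cvec, hK, ?_⟩
  have himg : ∀ (a' : Fin k → ℝ) (b' α' : ℝ),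
      Ggrp (Matrix.diagonal g) cvec
          * Emat (X2 k ε a' b') (fun i => if i.val = 0 then α'
              else if i.val = 1 then (lam * r) * b'
              else if i.val = 2 * k + 1 then (lam * r) * a' ⟨0, hk⟩ + (r ^ k * mu0) * b'
              else 0)
          * (Ggrp (Matrix.diagonal g) cvec)⁻¹
        = Emat (X2 k ε (fun j => r ^ (2 * j.val + 1) * a' j) (r ^ k * b'))
            (phiV k uu vv (fun j => r ^ (2 * j.val + 1) * a' j) (r ^ k * b')
              (g ⟨0, by omega⟩ * α'
                - (X2 k ε (fun j => r ^ (2 * j.val + 1) * a' j) (r ^ k * b') *ᵥ cvec)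
                    ⟨0, by omega⟩
                - (∑ j : Fin k, (r ^ (2 * j.val + 1) * a' j) * uu j ⟨0, by omega⟩)
                - (r ^ k * b') * vv ⟨0, by omega⟩)) := by
    intro a' b' α'
    rw [hconj a' b' _, CE a' b' α']
  apply Set.eq_of_subset_of_subset
  · intro m hm
    rw [hchar] at hm
    obtain ⟨a, b, α, rfl⟩ := hm
    have ha : (fun j : Fin k => r ^ (2 * j.val + 1) * (a j / r ^ (2 * j.val + 1))) = a := by
      funext j
      rw [mul_comm, div_mul_cancel₀ _ (pow_ne_zero _ hrne)]
    have hb : r ^ k * (b / r ^ k) = b := by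
      rw [mul_comm, div_mul_cancel₀ _ (pow_ne_zero _ hrne)]
    refine ⟨Emat (X2 k ε (fun j => a j / r ^ (2 * j.val + 1)) (b / r ^ k))
        (fun i => if i.val = 0 then
            (α + ((X2 k ε a b *ᵥ cvec) ⟨0, by omega⟩
              + (∑ j : Fin k, a j * uu j ⟨0, by omega⟩)
              + b * vv ⟨0, by omega⟩)) / g ⟨0, by omega⟩
          else if i.val = 1 then (lam * r) * (b / r ^ k)
          else if i.val = 2 * k + 1 then
            (lam * r) * (a ⟨0, hk⟩ / r ^ (2 * (⟨0, hk⟩ : Fin k).val + 1))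
              + (r ^ k * mu0) * (b / r ^ k)
          else 0),
      ⟨fun j => a j / r ^ (2 * j.val + 1), b / r ^ k, _, rfl⟩, ?_⟩
    show Ggrp (Matrix.diagonal g) cvec * _ * (Ggrp (Matrix.diagonal g) cvec)⁻¹ = _
    rw [himg]
    rw [ha, hb]
    congr 1
    have hsum : (∑ j : Fin k, (r ^ (2 * j.val + 1) * (a j / r ^ (2 * j.val + 1)))
          * uu j ⟨0, by omega⟩)
        = ∑ j : Fin k, a j * uu j ⟨0, by omega⟩ := by
      refine Finset.sum_congr rfl fun j _ => ?_
      rw [mul_comm (r ^ (2 * j.val + 1)), div_mul_cancel₀ _ (pow_ne_zero _ hrne)]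
    rw [hsum]
    congr 1
    have hg0 : g ⟨0, by omega⟩ ≠ 0 := hgne _
    field_simp
    ring
  · rintro m ⟨mm, ⟨a', b', α', rfl⟩, rfl⟩
    show Ggrp (Matrix.diagonal g) cvec * _ * (Ggrp (Matrix.diagonal g) cvec)⁻¹ ∈ M
    rw [himg, hchar]
    exact ⟨_, _, _, rfl⟩

/-- Every MASA `M` of `e(K)` whose `o(K)`-projection is `{X(a,b)}` and whose
translation part is `ℝ·E(0,e₁)` is `E(K)`-conjugate to some `M_{λ,μ}` with
`(λ,μ) ∈ {(0,0), (0,1), (0,-1)} ∪ {(1,μ) : μ ∈ ℝ}`. -/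
theorem stmt2 (k : ℕ) (hk : 0 < k) (ε : ℝ) (hε : ε = 1 ∨ ε = -1)
    (M : Set (Matrix (Fin (2 * k + 2 + 1)) (Fin (2 * k + 2 + 1)) ℝ))
    (hM : IsMASA (eK (K2 k ε)) M)
    (hproj : {X | ∃ ξ : Fin (2 * k + 2) → ℝ, Emat X ξ ∈ M} =
      {X | ∃ (a : Fin k → ℝ) (b : ℝ), X = X2 k ε a b})
    (htrans : M ∩ {m | ∃ a : Fin (2 * k + 2) → ℝ,
        m = Emat (0 : Matrix (Fin (2 * k + 2)) (Fin (2 * k + 2)) ℝ) a} =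
      {m | ∃ c : ℝ,
        m = Emat (0 : Matrix (Fin (2 * k + 2)) (Fin (2 * k + 2)) ℝ)
          (fun i => if i.val = 0 then c else 0)}) :
    ∃ lam mu : ℝ,
      ((lam = 0 ∧ (mu = 0 ∨ mu = 1 ∨ mu = -1)) ∨ lam = 1) ∧
      ConjTo (K2 k ε) M (Mlm k hk ε lam mu) := by
  obtain ⟨hsub, habel, hzero, hadd, hsmul, hmax⟩ := hM
  have hε0 : ε ≠ 0 := by rcases hε with h | h <;> rw [h] <;> norm_num
  -- choose translation parts for the generators
  have hex : ∀ (a : Fin k → ℝ) (b : ℝ), ∃ ξ, Emat (X2 k ε a b) ξ ∈ M := by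
    intro a b
    have : X2 k ε a b ∈ {X | ∃ (a : Fin k → ℝ) (b : ℝ), X = X2 k ε a b} := ⟨a, b, rfl⟩
    rw [← hproj] at this
    exact this
  choose uu huu using fun j : Fin k => hex (Pi.single j 1) 0
  obtain ⟨vv, hvv⟩ := hex 0 1
  -- membership of e0 translations
  have he0 : ∀ c : ℝ, Emat 0 (e0v k c) ∈ M := by
    intro c
    have : Emat (0 : Matrix (Fin (2*k+2)) (Fin (2*k+2)) ℝ) (e0v k c) ∈
        {m | ∃ c : ℝ, m = Emat (0 : Matrix (Fin (2*k+2)) (Fin (2*k+2)) ℝ)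
          (fun i => if i.val = 0 then c else 0)} := ⟨c, rfl⟩
    rw [← htrans] at this
    exact this.1
  -- forward membership
  have hmem : ∀ (a : Fin k → ℝ) (b α : ℝ),
      Emat (X2 k ε a b) (phiV k uu vv a b α) ∈ M := by
    intro a b α
    have heq : Emat (X2 k ε a b) (phiV k uu vv a b α)
        = ((∑ j : Fin k, a j • Emat (X2 k ε (Pi.single j 1) 0) (uu j))
            + b • Emat (X2 k ε 0 1) vv) + Emat 0 (e0v k α) := by
      have hmat : (∑ j : Fin k, a j • X2 k ε (Pi.single j 1) 0) + b • X2 k ε 0 1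
          + (0 : Matrix (Fin (2*k+2)) (Fin (2*k+2)) ℝ) = X2 k ε a b := by
        simp only [X2_single, X2_B, add_zero]
        rw [X2]
      have hvec : (∑ j : Fin k, a j • uu j) + b • vv + e0v k α = phiV k uu vv a b α := rfl
      rw [Emat_sum, Emat_smul, Emat_add, Emat_add, hmat, hvec]
    rw [heq]
    apply hadd _ (hadd _ (by
        refine Finset.sum_induction _ (· ∈ M) (fun a b ha hb => hadd a ha b hb) hzero ?_
        intro j _
        exact hsmul (a j) _ (huu j)) _ (hsmul b _ hvv)) _ (he0 α)
  -- characterization of M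
  have hchar : M = {m | ∃ (a : Fin k → ℝ) (b α : ℝ),
      m = Emat (X2 k ε a b) (phiV k uu vv a b α)} := by
    apply Set.eq_of_subset_of_subset
    · intro m hm
      obtain ⟨X, hX, ξ, rfl⟩ := hsub hm
      have hX2 : X ∈ {X | ∃ (a : Fin k → ℝ) (b : ℝ), X = X2 k ε a b} := by
        rw [← hproj]; exact ⟨ξ, hm⟩
      obtain ⟨a, b, rfl⟩ := hX2
      have hdiff : Emat (X2 k ε a b) ξ + (-1 : ℝ) • Emat (X2 k ε a b) (phiV k uu vv a b 0)
          ∈ M := hadd _ hm _ (hsmul (-1) _ (hmem a b 0))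
      rw [Emat_smul, Emat_add] at hdiff
      have h0 : X2 k ε a b + (-1 : ℝ) • X2 k ε a b = 0 := by module
      rw [h0] at hdiff
      have hT : Emat 0 (ξ + (-1 : ℝ) • phiV k uu vv a b 0) ∈
          {m | ∃ c : ℝ, m = Emat (0 : Matrix (Fin (2*k+2)) (Fin (2*k+2)) ℝ)
            (fun i => if i.val = 0 then c else 0)} := by
        rw [← htrans]
        exact ⟨hdiff, ⟨_, rfl⟩⟩
      obtain ⟨c, hc⟩ := hT
      have hξ : ξ + (-1 : ℝ) • phiV k uu vv a b 0 = e0v k c := (Emat_inj hc).2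
      refine ⟨a, b, c, ?_⟩
      have : ξ = phiV k uu vv a b 0 + e0v k c := by
        rw [← hξ]; module
      rw [this, phiV_add_e0]
    · rintro m ⟨a, b, α, rfl⟩
      exact hmem a b α
  -- commutation relations
  have Ru : ∀ j l : Fin k,
      (S2 k ^ (2 * j.val + 1)) *ᵥ uu l = (S2 k ^ (2 * l.val + 1)) *ᵥ uu j := by
    intro j l
    have h := habel _ (huu j) _ (huu l)
    rw [Emat_mul, Emat_mul] at h
    have := (Emat_inj h).2
    rwa [X2_single, X2_single] at this
  have Rv : ∀ j : Fin k, (S2 k ^ (2 * j.val + 1)) *ᵥ vv = B2 k ε *ᵥ uu j := by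
    intro j
    have h := habel _ (huu j) _ hvv
    rw [Emat_mul, Emat_mul] at h
    have := (Emat_inj h).2
    rwa [X2_single, X2_B] at this
  exact key k hk ε hε0 M uu vv hchar Ru Rv
end

section
/- Let K ∈ ℝ^{3×3} be the matrix K = E_{1,3} + E_{3,1} + E_{2,2}. For a, z ∈ ℝ let X_e(a,z) be the 4×4 matrix a(E_{1,2} − E_{2,3} + E_{3,4}) + z E_{1,4}. Then M = {X_e(a,z) : a, z ∈ ℝ} is a maximal abelian subalgebra of the Lie algebra e(K). -/
open Matrix

lemma Emat_eq (X : Matrix (Fin 3) (Fin 3) ℝ) (v : Fin 3 → ℝ) :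
    Emat X v = !![X 0 0, X 0 1, X 0 2, v 0;
                  X 1 0, X 1 1, X 1 2, v 1;
                  X 2 0, X 2 1, X 2 2, v 2;
                  0, 0, 0, 0] := by
  ext i j
  fin_cases i <;> fin_cases j <;> rfl

/-- `M = {X_e(a,z)}` with `X_e(a,z) = a(E₁₂ - E₂₃ + E₃₄) + z E₁₄` is a maximal
abelian subalgebra of `e(K)`, `K = E₁₃ + E₃₁ + E₂₂`. -/
theorem stmt19 :
    IsMASA (eK (!![0, 0, 1; 0, 1, 0; 1, 0, 0] : Matrix (Fin 3) (Fin 3) ℝ))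
      {m | ∃ a z : ℝ,
        m = !![0, a, 0, z;
               0, 0, -a, 0;
               0, 0, 0, a;
               0, 0, 0, 0]} := by
  refine ⟨?_, ?_, ⟨0, 0, by ext i j; fin_cases i <;> fin_cases j <;> simp [Matrix.vecHead, Matrix.vecTail, Function.comp]⟩, ?_, ?_, ?_⟩
  · rintro m ⟨a, z, rfl⟩
    refine ⟨!![0, a, 0; 0, 0, -a; 0, 0, 0], ?_, ![z, 0, a], ?_⟩
    · show _ * _ + _ * _ = 0
      ext i j
      fin_cases i <;> fin_cases j <;>
        simp [Matrix.mul_apply, Fin.sum_univ_three, Matrix.vecHead, Matrix.vecTail,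
          Function.comp, Matrix.vecMul, dotProduct]
    · rw [Emat_eq]
      norm_num [Matrix.vecHead, Matrix.vecTail, Function.comp, Matrix.cons_val_two]
  · rintro _ ⟨a, z, rfl⟩ _ ⟨b, w, rfl⟩
    ext i j
    fin_cases i <;> fin_cases j <;>
      (try simp [Matrix.mul_apply, Fin.sum_univ_four, Matrix.vecHead, Matrix.vecTail,
        Function.comp]) <;> ring
  · rintro _ ⟨a, z, rfl⟩ _ ⟨b, w, rfl⟩
    refine ⟨a + b, z + w, ?_⟩
    ext i j
    fin_cases i <;> fin_cases j <;>
      (try simp [Matrix.vecHead, Matrix.vecTail, Function.comp]) <;> ring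
  · rintro c _ ⟨a, z, rfl⟩
    refine ⟨c * a, c * z, ?_⟩
    ext i j
    fin_cases i <;> fin_cases j <;>
      simp [Matrix.vecHead, Matrix.vecTail, Function.comp]
  · rintro Y ⟨X, hX, v, rfl⟩ hcomm
    have hA := hcomm _ ⟨1, 0, rfl⟩
    rw [Emat_eq] at hA
    have hX' : X * (!![0, 0, 1; 0, 1, 0; 1, 0, 0] : Matrix (Fin 3) (Fin 3) ℝ)
        + !![0, 0, 1; 0, 1, 0; 1, 0, 0] * Xᵀ = 0 := hX
    have hXe := fun i j => congrFun (congrFun hX' i) j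
    have e00 : X 0 2 + X 0 2 = 0 := by
      simpa [Matrix.mul_apply, Matrix.vecMul, dotProduct, Matrix.transpose_apply,
        Fin.sum_univ_three, Matrix.vecHead, Matrix.vecTail, Function.comp] using hXe 0 0
    have e22 : X 2 0 + X 2 0 = 0 := by
      simpa [Matrix.mul_apply, Matrix.vecMul, dotProduct, Matrix.transpose_apply,
        Fin.sum_univ_three, Matrix.vecHead, Matrix.vecTail, Function.comp] using hXe 2 2
    have e11 : X 1 1 + X 1 1 = 0 := by
      simpa [Matrix.mul_apply, Matrix.vecMul, dotProduct, Matrix.transpose_apply,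
        Fin.sum_univ_three, Matrix.vecHead, Matrix.vecTail, Function.comp] using hXe 1 1
    have e02 : X 0 0 + X 2 2 = 0 := by
      simpa [Matrix.mul_apply, Matrix.vecMul, dotProduct, Matrix.transpose_apply,
        Fin.sum_univ_three, Matrix.vecHead, Matrix.vecTail, Function.comp] using hXe 0 2
    have e01 : X 0 1 + X 1 2 = 0 := by
      simpa [Matrix.mul_apply, Matrix.vecMul, dotProduct, Matrix.transpose_apply,
        Fin.sum_univ_three, Matrix.vecHead, Matrix.vecTail, Function.comp] using hXe 0 1
    have e12 : X 1 0 + X 2 1 = 0 := by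
      simpa [Matrix.mul_apply, Matrix.vecMul, dotProduct, Matrix.transpose_apply,
        Fin.sum_univ_three, Matrix.vecHead, Matrix.vecTail, Function.comp] using hXe 1 2
    have hAe := fun i j => congrFun (congrFun hA i) j
    have c10 : X 1 0 = 0 := by
      have := hAe 0 0
      simp [Matrix.mul_apply, Fin.sum_univ_four, Matrix.vecHead, Matrix.vecTail,
        Function.comp] at this
      linarith
    have c00 : X 0 0 = X 1 1 := by
      have := hAe 0 1
      simp [Matrix.mul_apply, Fin.sum_univ_four, Matrix.vecHead, Matrix.vecTail,
        Function.comp] at this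
      linarith
    have cv : v 1 = 0 := by
      have := hAe 0 3
      simp [Matrix.mul_apply, Fin.sum_univ_four, Matrix.vecHead, Matrix.vecTail,
        Function.comp] at this
      linarith
    have cq : X 1 2 = -v 2 := by
      have := hAe 1 3
      simp [Matrix.mul_apply, Fin.sum_univ_four, Matrix.vecHead, Matrix.vecTail,
        Function.comp] at this
      linarith
    refine ⟨X 0 1, v 0, ?_⟩
    rw [Emat_eq]
    have h00 : X 0 0 = 0 := by linarith
    have h11 : X 1 1 = 0 := by linarith
    have h22 : X 2 2 = 0 := by linarith
    have h02 : X 0 2 = 0 := by linarith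
    have h20 : X 2 0 = 0 := by linarith
    have h21 : X 2 1 = 0 := by linarith
    have h12 : X 1 2 = -X 0 1 := by linarith
    have hv2 : v 2 = X 0 1 := by linarith
    rw [h00, h11, h22, h02, h20, h21, h12, c10, cv, hv2]
end
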